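/- Let U and Ỹ be real Banach spaces, let K ⊆ Ỹ be a weakly sequentially closed subset, and let g : U × ℝ^n → Ỹ satisfy: whenever u_m ⇀ u weakly in U and z_m → z in ℝ^n, then g(u_m, z_m) ⇀ g(u, z) weakly in Ỹ. Let ζ be a random vector with values in ℝ^n on a probability space (Ω, 𝒜, ℙ). Then for every u ∈ U the set {z ∈ ℝ^n : g(u, z) ∈ K} is closed (hence Borel), so the probability function φ̃(u) := ℙ(g(u, ζ) ∈ K) is well-defined, and φ̃ is weakly sequentially upper semicontinuous: for every ū ∈ U and every sequence (u_m) with u_m ⇀ ū weakly, limsup_{m→∞} φ̃(u_m) ≤ φ̃(ū). -/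
import Mathlib


open MeasureTheory Filter

/-- Weak sequential convergence in a normed space: `f (x m) → f x` for every continuous
linear functional `f`. -/
def WeakSeqConv {X : Type*} [NormedAddCommGroup X] [NormedSpace ℝ X]
    (x : ℕ → X) (x₀ : X) : Prop :=
  ∀ f : X →L[ℝ] ℝ, Tendsto (fun m => f (x m)) atTop (nhds (f x₀))

/-- If `K` is weakly sequentially closed and `g` maps weakly convergent
sequences in `U` together with convergent sequences in `ℝⁿ` to weakly convergent sequences
in `Ỹ`, then for every `u` the set `{z | g u z ∈ K}` is closed, and the probability
function `φ̃(u) = ℙ(g (u, ζ) ∈ K)` is weakly sequentially upper semicontinuous. -/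
theorem probability_function_weakly_seq_usc
    {U Ytil : Type*} [NormedAddCommGroup U] [NormedSpace ℝ U] [CompleteSpace U]
    [NormedAddCommGroup Ytil] [NormedSpace ℝ Ytil] [CompleteSpace Ytil] {n : ℕ}
    (K : Set Ytil)
    (hK : ∀ (y : ℕ → Ytil) (y₀ : Ytil), (∀ m, y m ∈ K) → WeakSeqConv y y₀ → y₀ ∈ K)
    (g : U → (Fin n → ℝ) → Ytil)
    (hg : ∀ (u : ℕ → U) (u₀ : U) (z : ℕ → (Fin n → ℝ)) (z₀ : Fin n → ℝ),
      WeakSeqConv u u₀ → Tendsto z atTop (nhds z₀) →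
      WeakSeqConv (fun m => g (u m) (z m)) (g u₀ z₀))
    {Ω : Type*} [MeasurableSpace Ω] (P : Measure Ω) [IsProbabilityMeasure P]
    (ζ : Ω → (Fin n → ℝ)) (hζ : Measurable ζ) :
    (∀ u : U, IsClosed {z : Fin n → ℝ | g u z ∈ K}) ∧
    (∀ (ubar : U) (u : ℕ → U), WeakSeqConv u ubar →
      limsup (fun m => P {ω | g (u m) (ζ ω) ∈ K}) atTop ≤ P {ω | g ubar (ζ ω) ∈ K}) := by
  have hclosed : ∀ u : U, IsClosed {z : Fin n → ℝ | g u z ∈ K} := by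
    intro u
    refine IsSeqClosed.isClosed ?_
    intro z z₀ hz hzt
    exact hK _ _ hz (hg (fun _ => u) u z z₀ (fun f => tendsto_const_nhds) hzt)
  refine ⟨hclosed, ?_⟩
  intro ubar u hu
  set A : ℕ → Set Ω := fun m => {ω | g (u m) (ζ ω) ∈ K} with hA
  have hAm : ∀ m, MeasurableSet (A m) := fun m =>
    (hclosed (u m)).measurableSet.preimage hζ
  set B : ℕ → Set Ω := fun N => ⋃ m, ⋃ (_ : N ≤ m), A m with hB
  have hBanti : Antitone B := fun i j hij =>
    Set.biUnion_subset_biUnion_left fun m hm => le_trans hij hm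
  -- every point in ⋂ N, B N is in the limit set
  have hsub : (⋂ N, B N) ⊆ {ω | g ubar (ζ ω) ∈ K} := by
    intro ω hω
    have hfreq : ∃ᶠ m in atTop, ω ∈ A m := by
      rw [frequently_atTop]
      intro N
      rcases Set.mem_iUnion₂.1 (Set.mem_iInter.1 hω N) with ⟨m, hm, hmem⟩
      exact ⟨m, hm, hmem⟩
    obtain ⟨φ, hφ, hφA⟩ := extraction_of_frequently_atTop hfreq
    have huφ : WeakSeqConv (fun k => u (φ k)) ubar := fun f =>
      (hu f).comp hφ.tendsto_atTop
    have := hg (fun k => u (φ k)) ubar (fun _ => ζ ω) (ζ ω) huφ tendsto_const_nhds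
    exact hK _ _ hφA this
  calc limsup (fun m => P (A m)) atTop
      ≤ ⨅ N, P (B N) := by
        refine le_iInf fun N => ?_
        refine limsup_le_of_le (by isBoundedDefault) ?_
        filter_upwards [eventually_ge_atTop N] with m hm
        exact measure_mono (Set.subset_biUnion_of_mem hm)
    _ = P (⋂ N, B N) := by
        refine (hBanti.measure_iInter (fun N => ?_) ⟨0, measure_ne_top P _⟩).symm
        exact (MeasurableSet.biUnion (Set.to_countable _)
          (fun m _ => hAm m)).nullMeasurableSet
    _ ≤ P {ω | g ubar (ζ ω) ∈ K} := measure_mono hsub
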